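/- In a convex cyclic quadrilateral whose diagonals are perpendicular, the line through the intersection point of the diagonals perpendicular to one side bisects the opposite side. -/

import Mathlib

open EuclideanGeometry

/-- Brahmagupta's theorem (BSS XII.30-31): in a convex cyclic quadrilateral with
    perpendicular diagonals meeting at J, the line through J perpendicular to side AB
    passes through the midpoint of the opposite side CD. -/
theorem brahmagupta_theorem (A B C D O J : EuclideanSpace ℝ (Fin 2)) (r : ℝ)
    (hA : dist O A = r) (hB : dist O B = r) (hC : dist O C = r) (hD : dist O D = r)
    (hJAC : J ∈ segment ℝ A C) (hJBD : J ∈ segment ℝ B D)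
    (hperp : inner ℝ (C - A) (D - B) = (0 : ℝ)) :
    inner ℝ (midpoint ℝ C D - J) (B - A) = (0 : ℝ) := by
  obtain ⟨a1, s, ha1, hs, hab1, hJ1⟩ := hJAC
  obtain ⟨a2, t, ha2, ht, hab2, hJ2⟩ := hJBD
  have ha1' : a1 = 1 - s := by linarith
  have ha2' : a2 = 1 - t := by linarith
  subst ha1' ha2'
  have hJA : J - A = s • (C - A) := by rw [← hJ1]; module
  have hJB : J - B = t • (D - B) := by rw [← hJ2]; module
  have hBA : B - A = s • (C - A) - t • (D - B) := by
    linear_combination (norm := module) hJA - hJB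
  have hCO : C - O = (A - O) + (C - A) := by module
  have hBO : B - O = (A - O) + (s • (C - A) - t • (D - B)) := by
    linear_combination (norm := module) hBA
  have hDO : D - O = (A - O) + (s • (C - A) + (1 - t) • (D - B)) := by
    linear_combination (norm := module) hBA
  have hMJ : midpoint ℝ C D - J =
      (2⁻¹ * (1 - s)) • (C - A) + (2⁻¹ * (1 - t)) • (D - B) := by
    rw [midpoint_eq_smul_add, invOf_eq_inv]
    linear_combination (norm := module) (-(2⁻¹ : ℝ)) • hJA + (-(2⁻¹ : ℝ)) • hJB
  have nA : (inner ℝ (A - O) (A - O) : ℝ) = r ^ 2 := by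
    rw [real_inner_self_eq_norm_sq, ← dist_eq_norm, dist_comm, hA]
  have nB : (inner ℝ (B - O) (B - O) : ℝ) = r ^ 2 := by
    rw [real_inner_self_eq_norm_sq, ← dist_eq_norm, dist_comm, hB]
  have nC : (inner ℝ (C - O) (C - O) : ℝ) = r ^ 2 := by
    rw [real_inner_self_eq_norm_sq, ← dist_eq_norm, dist_comm, hC]
  have nD : (inner ℝ (D - O) (D - O) : ℝ) = r ^ 2 := by
    rw [real_inner_self_eq_norm_sq, ← dist_eq_norm, dist_comm, hD]
  rw [hCO] at nC
  rw [hBO] at nB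
  rw [hDO] at nD
  rw [hMJ, hBA]
  have kBA : (inner ℝ B A : ℝ) = inner ℝ A B := real_inner_comm _ _
  have kCA : (inner ℝ C A : ℝ) = inner ℝ A C := real_inner_comm _ _
  have kDA : (inner ℝ D A : ℝ) = inner ℝ A D := real_inner_comm _ _
  have kOA : (inner ℝ O A : ℝ) = inner ℝ A O := real_inner_comm _ _
  have kCB : (inner ℝ C B : ℝ) = inner ℝ B C := real_inner_comm _ _
  have kDB : (inner ℝ D B : ℝ) = inner ℝ B D := real_inner_comm _ _
  have kOB : (inner ℝ O B : ℝ) = inner ℝ B O := real_inner_comm _ _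
  have kDC : (inner ℝ D C : ℝ) = inner ℝ C D := real_inner_comm _ _
  have kOC : (inner ℝ O C : ℝ) = inner ℝ C O := real_inner_comm _ _
  have kOD : (inner ℝ O D : ℝ) = inner ℝ D O := real_inner_comm _ _
  have hp := hperp
  simp only [inner_add_left, inner_add_right, inner_sub_left, inner_sub_right,
    real_inner_smul_left, real_inner_smul_right, kBA, kCA, kDA, kOA, kCB, kDB,
    kOB, kDC, kOC, kOD] at nA nB nC nD hp ⊢
  linear_combination ((1 - s) / 2) * nA - ((1 - t) / 2) * nB + (s / 2) * nC
    - (t / 2) * nD + ((s - t) / 2) * hp
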